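/- arXiv:1607.07067 — 5 statements merged into one kernel-verified Lean document; each statement's English description precedes it below -/
import Mathlib

section
/- For all integers m ≥ 1 and n ≥ 0 one has [D(−e₂), [D(−e₁), (∂₁^m ∂₂^n D)(e₁)]] = −n(m+1) · (∂₁^m ∂₂^n D)(e₁). -/
/-- Difference derivative in direction `e₁` for functions on `ℤ²`. -/
def ddx {V : Type*} [AddCommGroup V] (f : ℤ × ℤ → V) : ℤ × ℤ → V :=
  fun s => f (s.1 + 1, s.2) - f s

/-- Difference derivative in direction `e₂` for functions on `ℤ²`. -/
def ddy {V : Type*} [AddCommGroup V] (f : ℤ × ℤ → V) : ℤ × ℤ → V :=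
  fun s => f (s.1, s.2 + 1) - f s

section Aux

variable {V : Type*} [AddCommGroup V]

/-- Shift in direction `e₁`. -/
def shx (f : ℤ × ℤ → V) : ℤ × ℤ → V := fun s => f (s.1 + 1, s.2)
/-- Shift in direction `e₂`. -/
def shy (f : ℤ × ℤ → V) : ℤ × ℤ → V := fun s => f (s.1, s.2 + 1)
/-- Shift in direction `-e₁`. -/
def shx' (f : ℤ × ℤ → V) : ℤ × ℤ → V := fun s => f (s.1 - 1, s.2)
/-- Shift in direction `-e₂`. -/
def shy' (f : ℤ × ℤ → V) : ℤ × ℤ → V := fun s => f (s.1, s.2 - 1)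
/-- Multiplication by the first coordinate. -/
def mx (f : ℤ × ℤ → V) : ℤ × ℤ → V := fun s => s.1 • f s
/-- Multiplication by the second coordinate. -/
def my (f : ℤ × ℤ → V) : ℤ × ℤ → V := fun s => s.2 • f s

lemma ddx_add (f g : ℤ × ℤ → V) : ddx (f + g) = ddx f + ddx g := by
  funext s; simp [ddx]; abel

lemma ddy_add (f g : ℤ × ℤ → V) : ddy (f + g) = ddy f + ddy g := by
  funext s; simp [ddy]; abel

lemma ddx_neg (f : ℤ × ℤ → V) : ddx (-f) = -(ddx f) := by
  funext s; simp [ddx]; abel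

lemma ddy_neg (f : ℤ × ℤ → V) : ddy (-f) = -(ddy f) := by
  funext s; simp [ddy]; abel

lemma ddx_smul (c : ℤ) (f : ℤ × ℤ → V) : ddx (c • f) = c • ddx f := by
  funext s; simp [ddx, smul_sub]

lemma ddy_smul (c : ℤ) (f : ℤ × ℤ → V) : ddy (c • f) = c • ddy f := by
  funext s; simp [ddy, smul_sub]

lemma ddx_zero : ddx (0 : ℤ × ℤ → V) = 0 := by funext s; simp [ddx]

lemma ddy_zero : ddy (0 : ℤ × ℤ → V) = 0 := by funext s; simp [ddy]

lemma ddx_const (c : V) : ddx (fun _ => c) = 0 := by funext s; simp [ddx]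

lemma ddy_const (c : V) : ddy (fun _ => c) = 0 := by funext s; simp [ddy]

lemma ddx_iter_add (m : ℕ) (f g : ℤ × ℤ → V) :
    ddx^[m] (f + g) = ddx^[m] f + ddx^[m] g := by
  induction m generalizing f g with
  | zero => simp
  | succ k ih => simp only [Function.iterate_succ_apply, ddx_add, ih]

lemma ddy_iter_add (n : ℕ) (f g : ℤ × ℤ → V) :
    ddy^[n] (f + g) = ddy^[n] f + ddy^[n] g := by
  induction n generalizing f g with
  | zero => simp
  | succ k ih => simp only [Function.iterate_succ_apply, ddy_add, ih]

lemma ddx_iter_neg (m : ℕ) (f : ℤ × ℤ → V) : ddx^[m] (-f) = -(ddx^[m] f) := by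
  induction m generalizing f with
  | zero => simp
  | succ k ih => simp only [Function.iterate_succ_apply, ddx_neg, ih]

lemma ddy_iter_neg (n : ℕ) (f : ℤ × ℤ → V) : ddy^[n] (-f) = -(ddy^[n] f) := by
  induction n generalizing f with
  | zero => simp
  | succ k ih => simp only [Function.iterate_succ_apply, ddy_neg, ih]

lemma ddx_iter_smul (m : ℕ) (c : ℤ) (f : ℤ × ℤ → V) :
    ddx^[m] (c • f) = c • ddx^[m] f := by
  induction m generalizing f with
  | zero => simp
  | succ k ih => simp only [Function.iterate_succ_apply, ddx_smul, ih]

lemma ddy_iter_smul (n : ℕ) (c : ℤ) (f : ℤ × ℤ → V) :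
    ddy^[n] (c • f) = c • ddy^[n] f := by
  induction n generalizing f with
  | zero => simp
  | succ k ih => simp only [Function.iterate_succ_apply, ddy_smul, ih]

lemma ddx_iter_zero (m : ℕ) : ddx^[m] (0 : ℤ × ℤ → V) = 0 := by
  induction m with
  | zero => simp
  | succ k ih => simp only [Function.iterate_succ_apply, ddx_zero, ih]

lemma ddy_iter_zero (n : ℕ) : ddy^[n] (0 : ℤ × ℤ → V) = 0 := by
  induction n with
  | zero => simp
  | succ k ih => simp only [Function.iterate_succ_apply, ddy_zero, ih]

lemma ddx_ddy (f : ℤ × ℤ → V) : ddx (ddy f) = ddy (ddx f) := by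
  funext s; simp [ddx, ddy]; abel

lemma ddx_shy (f : ℤ × ℤ → V) : ddx (shy f) = shy (ddx f) := rfl
lemma ddx_shx (f : ℤ × ℤ → V) : ddx (shx f) = shx (ddx f) := rfl
lemma ddx_shx' (f : ℤ × ℤ → V) : ddx (shx' f) = shx' (ddx f) := by
  funext s; simp only [ddx, shx']; norm_num
lemma ddx_shy' (f : ℤ × ℤ → V) : ddx (shy' f) = shy' (ddx f) := rfl
lemma ddy_shx (f : ℤ × ℤ → V) : ddy (shx f) = shx (ddy f) := rfl
lemma ddy_shy (f : ℤ × ℤ → V) : ddy (shy f) = shy (ddy f) := rfl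
lemma ddy_shx' (f : ℤ × ℤ → V) : ddy (shx' f) = shx' (ddy f) := rfl
lemma ddy_shy' (f : ℤ × ℤ → V) : ddy (shy' f) = shy' (ddy f) := by
  funext s; simp only [ddy, shy']; norm_num

lemma ddx_my (f : ℤ × ℤ → V) : ddx (my f) = my (ddx f) := by
  funext s; simp [ddx, my, smul_sub]

lemma ddy_mx (f : ℤ × ℤ → V) : ddy (mx f) = mx (ddy f) := by
  funext s; simp [ddy, mx, smul_sub]

lemma ddx_mx (f : ℤ × ℤ → V) : ddx (mx f) = mx (ddx f) + shx f := by
  funext s; simp [ddx, mx, shx, add_smul, smul_sub]; abel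

lemma ddy_my (f : ℤ × ℤ → V) : ddy (my f) = my (ddy f) + shy f := by
  funext s; simp [ddy, my, shy, add_smul, smul_sub]; abel

lemma ddx_iter_ddy (m : ℕ) (f : ℤ × ℤ → V) :
    ddx^[m] (ddy f) = ddy (ddx^[m] f) := by
  induction m generalizing f with
  | zero => simp
  | succ k ih => simp only [Function.iterate_succ_apply, ddx_ddy, ih]

lemma ddy_iter_ddx (n : ℕ) (f : ℤ × ℤ → V) :
    ddy^[n] (ddx f) = ddx (ddy^[n] f) := by
  induction n generalizing f with
  | zero => simp
  | succ k ih => simp only [Function.iterate_succ_apply, ← ddx_ddy, ih]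

lemma ddx_iter_shy (m : ℕ) (f : ℤ × ℤ → V) :
    ddx^[m] (shy f) = shy (ddx^[m] f) := by
  induction m generalizing f with
  | zero => simp
  | succ k ih => simp only [Function.iterate_succ_apply, ddx_shy, ih]

lemma ddx_iter_shx (m : ℕ) (f : ℤ × ℤ → V) :
    ddx^[m] (shx f) = shx (ddx^[m] f) := by
  induction m generalizing f with
  | zero => simp
  | succ k ih => simp only [Function.iterate_succ_apply, ddx_shx, ih]

lemma ddx_iter_shx' (m : ℕ) (f : ℤ × ℤ → V) :
    ddx^[m] (shx' f) = shx' (ddx^[m] f) := by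
  induction m generalizing f with
  | zero => simp
  | succ k ih => simp only [Function.iterate_succ_apply, ddx_shx', ih]

lemma ddx_iter_shy' (m : ℕ) (f : ℤ × ℤ → V) :
    ddx^[m] (shy' f) = shy' (ddx^[m] f) := by
  induction m generalizing f with
  | zero => simp
  | succ k ih => simp only [Function.iterate_succ_apply, ddx_shy', ih]

lemma ddy_iter_shy (n : ℕ) (f : ℤ × ℤ → V) :
    ddy^[n] (shy f) = shy (ddy^[n] f) := by
  induction n generalizing f with
  | zero => simp
  | succ k ih => simp only [Function.iterate_succ_apply, ddy_shy, ih]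

lemma ddy_iter_shx (n : ℕ) (f : ℤ × ℤ → V) :
    ddy^[n] (shx f) = shx (ddy^[n] f) := by
  induction n generalizing f with
  | zero => simp
  | succ k ih => simp only [Function.iterate_succ_apply, ddy_shx, ih]

lemma ddy_iter_shx' (n : ℕ) (f : ℤ × ℤ → V) :
    ddy^[n] (shx' f) = shx' (ddy^[n] f) := by
  induction n generalizing f with
  | zero => simp
  | succ k ih => simp only [Function.iterate_succ_apply, ddy_shx', ih]

lemma ddy_iter_shy' (n : ℕ) (f : ℤ × ℤ → V) :
    ddy^[n] (shy' f) = shy' (ddy^[n] f) := by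
  induction n generalizing f with
  | zero => simp
  | succ k ih => simp only [Function.iterate_succ_apply, ddy_shy', ih]

lemma ddx_iter_my (m : ℕ) (f : ℤ × ℤ → V) :
    ddx^[m] (my f) = my (ddx^[m] f) := by
  induction m generalizing f with
  | zero => simp
  | succ k ih => simp only [Function.iterate_succ_apply, ddx_my, ih]

lemma ddy_iter_mx (n : ℕ) (f : ℤ × ℤ → V) :
    ddy^[n] (mx f) = mx (ddy^[n] f) := by
  induction n generalizing f with
  | zero => simp
  | succ k ih => simp only [Function.iterate_succ_apply, ddy_mx, ih]

lemma ddx_iter_mx (k : ℕ) (f : ℤ × ℤ → V) :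
    ddx^[k + 1] (mx f) = mx (ddx^[k + 1] f) + ((k : ℤ) + 1) • ddx^[k] (shx f) := by
  induction k generalizing f with
  | zero => simpa using ddx_mx f
  | succ k ih =>
    rw [Function.iterate_succ_apply, ddx_mx, ddx_iter_add, ih (ddx f),
      ← ddx_shx, ← Function.iterate_succ_apply ddx k (shx f),
      ← Function.iterate_succ_apply ddx (k + 1) f]
    push_cast
    module

lemma ddy_iter_my (k : ℕ) (f : ℤ × ℤ → V) :
    ddy^[k + 1] (my f) = my (ddy^[k + 1] f) + ((k : ℤ) + 1) • ddy^[k] (shy f) := by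
  induction k generalizing f with
  | zero => simpa using ddy_my f
  | succ k ih =>
    rw [Function.iterate_succ_apply, ddy_my, ddy_iter_add, ih (ddy f),
      ← ddy_shy, ← Function.iterate_succ_apply ddy k (shy f),
      ← Function.iterate_succ_apply ddy (k + 1) f]
    push_cast
    module

lemma kill_const (m k : ℕ) (hm : 1 ≤ m) (c : V) :
    ddx^[m] (ddy^[k] (fun _ => c)) = 0 := by
  obtain ⟨m, rfl⟩ : ∃ m', m = m' + 1 := ⟨m - 1, (Nat.succ_pred_eq_of_pos hm).symm⟩
  cases k with
  | zero =>
    simp only [Function.iterate_zero_apply]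
    rw [Function.iterate_succ_apply ddx m, ddx_const, ddx_iter_zero]
  | succ k =>
    rw [Function.iterate_succ_apply ddy k, ddy_const, ddy_iter_zero, ddx_iter_zero]

end Aux

section Bra

variable {L : Type*} [LieRing L]

lemma ddx_bra (c : L) (f : ℤ × ℤ → L) :
    ddx (fun s => ⁅c, f s⁆) = fun s => ⁅c, ddx f s⁆ := by
  funext s; simp [ddx, lie_sub]

lemma ddy_bra (c : L) (f : ℤ × ℤ → L) :
    ddy (fun s => ⁅c, f s⁆) = fun s => ⁅c, ddy f s⁆ := by
  funext s; simp [ddy, lie_sub]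

lemma ddx_iter_bra (m : ℕ) (c : L) (f : ℤ × ℤ → L) :
    ddx^[m] (fun s => ⁅c, f s⁆) = fun s => ⁅c, ddx^[m] f s⁆ := by
  induction m generalizing f with
  | zero => simp
  | succ k ih => rw [Function.iterate_succ_apply, ddx_bra, ih,
      Function.iterate_succ_apply]

lemma ddy_iter_bra (n : ℕ) (c : L) (f : ℤ × ℤ → L) :
    ddy^[n] (fun s => ⁅c, f s⁆) = fun s => ⁅c, ddy^[n] f s⁆ := by
  induction n generalizing f with
  | zero => simp
  | succ k ih => rw [Function.iterate_succ_apply, ddy_bra, ih,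
      Function.iterate_succ_apply]

end Bra

theorem stmt_0 {L : Type*} [LieRing L] [LieAlgebra ℂ L]
    (D : ℤ × ℤ → L)
    (hD : ∀ r s : ℤ × ℤ,
      ⁅D r, D s⁆ = (r.1 * s.2 - r.2 * s.1) • (D r + D s - D (r + s)))
    (m n : ℕ) (hm : 1 ≤ m) :
    ⁅D (0, -1), ⁅D (-1, 0), (ddx^[m] (ddy^[n] D)) (1, 0)⁆⁆ =
      (-(n * (m + 1)) : ℤ) • (ddx^[m] (ddy^[n] D)) (1, 0) := by
  set a : L := D (-1, 0) with ha
  set b : L := D (0, -1) with hb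
  -- the functions appearing after one bracket
  set Fa : ℤ × ℤ → L := fun s => a + D s - D (s.1 - 1, s.2) with hFa
  set Fb : ℤ × ℤ → L := fun s => b + D s - D (s.1, s.2 - 1) with hFb
  have hbraA : (fun s => ⁅a, D s⁆) = -(my Fa) := by
    funext s
    have h := hD (-1, 0) s
    have h2 : ((-1 : ℤ), (0 : ℤ)) + s = (s.1 - 1, s.2) := by
      ext <;> simp <;> ring
    rw [h2] at h
    simp only [Pi.neg_apply, my, hFa, ← ha] at *
    rw [h]
    have : ((-1 : ℤ) * s.2 - 0 * s.1) = -s.2 := by ring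
    rw [this, neg_smul]
  have hbraB : (fun s => ⁅b, D s⁆) = mx Fb := by
    funext s
    have h := hD (0, -1) s
    have h2 : ((0 : ℤ), (-1 : ℤ)) + s = (s.1, s.2 - 1) := by
      ext <;> simp <;> ring
    rw [h2] at h
    simp only [mx, hFb, ← hb] at *
    rw [h]
    have : ((0 : ℤ) * s.2 - (-1) * s.1) = s.1 := by ring
    rw [this]
  -- rewrite Fa and Fb via shifts of derivatives
  have hFa' : shy Fa = (fun _ => a) + shy (shx' (ddx D)) := by
    funext s
    simp only [Pi.add_apply, shy, shx', ddx, hFa]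
    have : s.1 - 1 + 1 = s.1 := by ring
    rw [this]
    abel
  have hFb' : Fb = (fun _ => b) + shy' (ddy D) := by
    funext s
    simp only [Pi.add_apply, shy', ddy, hFb]
    have : s.2 - 1 + 1 = s.2 := by ring
    rw [this]
    abel
  -- first bracket
  have key1 : ⁅a, (ddx^[m] (ddy^[n] D)) (1, 0)⁆
      = -((n : ℤ) • (ddx^[m + 1] (ddy^[n - 1] D)) (0, 1)) := by
    have e1 : ⁅a, (ddx^[m] (ddy^[n] D)) (1, 0)⁆
        = (ddx^[m] (ddy^[n] (fun s => ⁅a, D s⁆))) (1, 0) := by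
      rw [ddy_iter_bra, ddx_iter_bra]
    rw [e1, hbraA]
    cases n with
    | zero =>
      simp only [Function.iterate_zero_apply, ddx_iter_neg, ddx_iter_my,
        Pi.neg_apply, Nat.cast_zero, zero_smul, neg_zero]
      simp [my]
    | succ k =>
      rw [ddy_iter_neg, ddx_iter_neg, ddy_iter_my, ddx_iter_add, ddx_iter_smul,
        hFa', ddy_iter_add, ddx_iter_add, kill_const m k hm a,
        ddy_iter_shy, ddx_iter_shy, ddy_iter_shx', ddx_iter_shx']
      have hv : ddy^[k] (ddx D) = ddx (ddy^[k] D) := ddy_iter_ddx k D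
      simp only [Pi.neg_apply, Pi.add_apply, Pi.smul_apply, zero_add,
        ddx_iter_my]
      have hmy : my (ddx^[m] (ddy^[k + 1] Fa)) ((1 : ℤ), (0 : ℤ)) = 0 := by
        simp [my]
      rw [hmy, zero_add]
      have hev : shy (shx' (ddx^[m] (ddy^[k] (ddx D)))) ((1 : ℤ), (0 : ℤ))
          = (ddx^[m + 1] (ddy^[k] D)) ((0 : ℤ), (1 : ℤ)) := by
        have : ddx^[m] (ddy^[k] (ddx D)) = ddx^[m + 1] (ddy^[k] D) := by
          rw [hv, ← Function.iterate_succ_apply]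
        rw [this]
        simp [shy, shx']
      rw [hev]
      norm_num
  rw [key1]
  rw [lie_neg, lie_smul]
  cases n with
  | zero => simp
  | succ k =>
    -- second bracket
    have key2 : ⁅b, (ddx^[m + 1] (ddy^[k] D)) (0, 1)⁆
        = ((m : ℤ) + 1) • (ddx^[m] (ddy^[k + 1] D)) (1, 0) := by
      have e2 : ⁅b, (ddx^[m + 1] (ddy^[k] D)) (0, 1)⁆
          = (ddx^[m + 1] (ddy^[k] (fun s => ⁅b, D s⁆))) (0, 1) := by
        rw [ddy_iter_bra, ddx_iter_bra]
      rw [e2, hbraB, ddy_iter_mx, ddx_iter_mx]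
      have hmx : mx (ddx^[m + 1] (ddy^[k] Fb)) ((0 : ℤ), (1 : ℤ)) = 0 := by
        simp [mx]
      simp only [Pi.add_apply, Pi.smul_apply, hmx, zero_add]
      congr 1
      rw [← ddy_iter_shx, hFb']
      have hsum : shx ((fun _ => b) + shy' (ddy D))
          = (fun _ => b) + shx (shy' (ddy D)) := rfl
      rw [hsum, ddy_iter_add, ddx_iter_add, kill_const m k hm b]
      simp only [Pi.add_apply, zero_add]
      rw [ddy_iter_shx, ddy_iter_shy', ddx_iter_shx, ddx_iter_shy']
      have : ddy^[k] (ddy D) = ddy^[k + 1] D := by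
        rw [← Function.iterate_succ_apply]
      rw [this]
      simp [shx, shy']
    rw [Nat.add_sub_cancel, key2]
    push_cast
    module
end

section
/- The set {αᵢ : i ∈ ℕ, ρ(yᵢ) ≠ 0} of those scalars αᵢ for which ρ(yᵢ) is nonzero has at most (dim U)² − dim U + 1 elements. -/
open Module

lemma aux_intertwine {U : Type*} [AddCommGroup U] [Module ℂ U]
    (A B : Module.End ℂ U) (c ν : ℂ) (h : A * B = B * A + c • B) (k : ℕ) :
    (A - (ν + c) • 1) ^ k * B = B * (A - ν • 1) ^ k := by
  induction k with
  | zero => simp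
  | succ k ih =>
    have h1 : (A - (ν + c) • 1) * B = B * (A - ν • 1) := by
      have e1 : (A - (ν + c) • 1) * B = A * B - (ν + c) • B := by
        rw [sub_mul, smul_mul_assoc, one_mul]
      have e2 : B * (A - ν • 1) = B * A - ν • B := by
        rw [mul_sub, mul_smul_comm, mul_one]
      rw [e1, e2, h, add_smul]
      abel
    rw [pow_succ, pow_succ, mul_assoc, h1, ← mul_assoc, ih, mul_assoc]

lemma aux_key {U : Type*} [AddCommGroup U] [Module ℂ U] [FiniteDimensional ℂ U]
    (A B : Module.End ℂ U) (c : ℂ) (h : ⁅A, B⁆ = c • B) (hB : B ≠ 0) :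
    ∃ μ ν : ℂ, A.HasEigenvalue μ ∧ A.HasEigenvalue ν ∧ μ - ν = c := by
  obtain ⟨v, hv⟩ : ∃ v, B v ≠ 0 := by
    by_contra h'
    push_neg at h'
    exact hB (LinearMap.ext fun v => by simp [h' v])
  have hAB : A * B = B * A + c • B := by
    rw [Ring.lie_def] at h
    rw [← h]; abel
  have htop : v ∈ ⨆ μ, A.maxGenEigenspace μ := by
    rw [Module.End.iSup_maxGenEigenspace_eq_top]; trivial
  have hex : ∃ ν w, w ∈ A.maxGenEigenspace ν ∧ B w ≠ 0 := by
    refine Submodule.iSup_induction (motive := fun x => B x ≠ 0 → ∃ ν w, w ∈ A.maxGenEigenspace ν ∧ B w ≠ 0)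
      _ htop (fun ν w hw => fun hBw => ⟨ν, w, hw, hBw⟩) (fun h0 => absurd (by simp) h0) ?_ hv
    intro x y hx hy hxy
    by_cases hBx : B x = 0
    · exact hy (by simpa [map_add, hBx] using hxy)
    · exact hx hBx
  obtain ⟨ν, w, hw, hBw⟩ := hex
  have hw0 : w ≠ 0 := fun h0 => hBw (by simp [h0])
  obtain ⟨k, hk⟩ := (Module.End.mem_maxGenEigenspace A ν w).mp hw
  have hBwmem : B w ∈ A.maxGenEigenspace (ν + c) := by
    rw [Module.End.mem_maxGenEigenspace]
    refine ⟨k, ?_⟩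
    have := congrArg (fun f : Module.End ℂ U => f w) (aux_intertwine A B c ν hAB k)
    simp only [Module.End.mul_apply] at this
    rw [this, hk, map_zero]
  have hν : A.HasEigenvalue ν := by
    refine Module.End.HasUnifEigenvalue.lt (k := (⊤ : ℕ∞)) zero_lt_one ?_
    intro hbot
    have hw' : w ∈ (A.genEigenspace ν) ⊤ := hw
    rw [hbot] at hw'
    exact hw0 (by simpa using hw')
  have hμ : A.HasEigenvalue (ν + c) := by
    refine Module.End.HasUnifEigenvalue.lt (k := (⊤ : ℕ∞)) zero_lt_one ?_
    intro hbot
    have hw' : B w ∈ (A.genEigenspace (ν + c)) ⊤ := hBwmem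
    rw [hbot] at hw'
    exact hBw (by simpa using hw')
  exact ⟨ν + c, ν, hμ, hν, by ring⟩

lemma aux_card {U : Type*} [AddCommGroup U] [Module ℂ U] [FiniteDimensional ℂ U]
    (A : Module.End ℂ U) :
    {μ : ℂ | A.HasEigenvalue μ}.ncard ≤ Module.finrank ℂ U := by
  have hind := Module.End.independent_genEigenspace A 1
  haveI := hind.fintypeNeBotOfFiniteDimensional
  have hcard : Fintype.card {μ : ℂ // A.genEigenspace μ 1 ≠ ⊥} ≤ finrank ℂ U :=
    hind.subtype_ne_bot_le_finrank
  have heq : {μ : ℂ | A.HasEigenvalue μ}.ncard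
      = Nat.card {μ : ℂ // A.genEigenspace μ 1 ≠ ⊥} := by
    rw [← Nat.card_coe_set_eq]; rfl
  rw [heq, Nat.card_eq_fintype_card]
  exact hcard

attribute [local instance 100] LieRing.ofAssociativeRing

theorem stmt_1 {L : Type*} [LieRing L] [LieAlgebra ℂ L]
    {U : Type*} [AddCommGroup U] [Module ℂ U] [FiniteDimensional ℂ U]
    (ρ : L →ₗ⁅ℂ⁆ Module.End ℂ U)
    (y : L) (z : ℕ → L) (α : ℕ → ℂ)
    (hz : ∀ i, z i ≠ 0)
    (hbr : ∀ i, ⁅y, z i⁆ = α i • z i) :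
    {c : ℂ | ∃ i, α i = c ∧ ρ (z i) ≠ 0}.Finite ∧
      {c : ℂ | ∃ i, α i = c ∧ ρ (z i) ≠ 0}.ncard ≤
        Module.finrank ℂ U ^ 2 - Module.finrank ℂ U + 1 := by
  classical
  set A : Module.End ℂ U := ρ y with hA
  set S : Set ℂ := {c : ℂ | ∃ i, α i = c ∧ ρ (z i) ≠ 0} with hS
  have hkey : ∀ c ∈ S, ∃ μ ν : ℂ, A.HasEigenvalue μ ∧ A.HasEigenvalue ν ∧ μ - ν = c := by
    rintro c ⟨i, rfl, hne⟩
    refine aux_key A (ρ (z i)) (α i) ?_ hne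
    rw [hA, ← LieHom.map_lie, hbr i, map_smul]
  have hE : {μ : ℂ | A.HasEigenvalue μ}.Finite := A.finite_hasEigenvalue
  set Ef : Finset ℂ := hE.toFinset with hEf
  set T : Finset ℂ := Ef.offDiag.image fun p => p.1 - p.2 with hT
  have hsub : S ⊆ insert (0 : ℂ) ↑T := by
    intro c hc
    obtain ⟨μ, ν, hμ, hν, hd⟩ := hkey c hc
    by_cases h0 : c = 0
    · exact Or.inl h0
    · refine Or.inr ?_
      rw [Finset.coe_image]
      refine ⟨(μ, ν), ?_, hd⟩
      rw [Finset.coe_offDiag]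
      refine ⟨by simp [hEf, Set.Finite.mem_toFinset, hμ],
        by simp [hEf, Set.Finite.mem_toFinset, hν], fun he => h0 ?_⟩
      simp only at he
      rw [← hd, he, sub_self]
  have hfin : S.Finite := ((T.finite_toSet.insert 0)).subset hsub
  refine ⟨hfin, ?_⟩
  have h1 : S.ncard ≤ (insert (0 : ℂ) ↑T : Set ℂ).ncard :=
    Set.ncard_le_ncard hsub ((T.finite_toSet.insert 0))
  have h2 : (insert (0 : ℂ) ↑T : Set ℂ).ncard ≤ T.card + 1 := by
    calc (insert (0 : ℂ) ↑T : Set ℂ).ncard ≤ (↑T : Set ℂ).ncard + 1 := Set.ncard_insert_le _ _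
    _ = T.card + 1 := by rw [Set.ncard_coe_finset]
  have hm : Ef.card ≤ finrank ℂ U := by
    have h := aux_card A
    rwa [Set.ncard_eq_toFinset_card _ hE] at h
  have h3 : T.card ≤ Ef.card * Ef.card - Ef.card :=
    (Finset.card_image_le).trans_eq (Finset.offDiag_card _)
  have h4 : Ef.card * Ef.card - Ef.card ≤ finrank ℂ U * finrank ℂ U - finrank ℂ U := by
    have e1 : ∀ m : ℕ, m * m - m = m * (m - 1) := by
      intro m; cases m with
      | zero => simp
      | succ k => simp [Nat.succ_sub_one, Nat.mul_succ, Nat.succ_mul]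
    rw [e1, e1]
    exact Nat.mul_le_mul hm (Nat.sub_le_sub_right hm 1)
  have h5 : finrank ℂ U ^ 2 = finrank ℂ U * finrank ℂ U := sq _
  omega
end

section
/- Let K ≥ 0 be an integer, let x₀, …, x_K ∈ ℂ be pairwise distinct, let y₀, …, y_K ∈ ℂ be pairwise distinct, and let complex numbers a_{ij} be given for all integers i, j ≥ 0 with i + j ≤ K. Then there exists a unique polynomial P ∈ ℂ[X, Y] of total degree at most K such that P(xᵢ, yⱼ) = a_{ij} for all i, j ≥ 0 with i + j ≤ K. -/
open Polynomial Finset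

noncomputable def uPoly (z : ℕ → ℂ) (i : ℕ) : Polynomial ℂ :=
  ∏ k ∈ range i, (Polynomial.X - Polynomial.C (z k))

lemma uPoly_monic (z : ℕ → ℂ) (i : ℕ) : (uPoly z i).Monic :=
  monic_prod_of_monic _ _ fun k _ => monic_X_sub_C (z k)

lemma uPoly_natDegree (z : ℕ → ℂ) (i : ℕ) : (uPoly z i).natDegree = i := by
  rw [uPoly, natDegree_prod]
  · simp
  · intro k _; exact (monic_X_sub_C (z k)).ne_zero

lemma uni_span (z : ℕ → ℂ) : ∀ n (p : Polynomial ℂ), p.natDegree ≤ n →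
    p ∈ Submodule.span ℂ (uPoly z '' Set.Iic n) := by
  intro n
  induction n with
  | zero =>
    intro p hp
    have h0 : uPoly z 0 = 1 := by simp [uPoly]
    have : p = p.coeff 0 • uPoly z 0 := by
      rw [h0, Polynomial.smul_eq_C_mul, mul_one]
      exact Polynomial.eq_C_of_natDegree_le_zero hp
    rw [this]
    exact Submodule.smul_mem _ _ (Submodule.subset_span ⟨0, Set.mem_Iic.2 le_rfl, rfl⟩)
  | succ n ih =>
    intro p hp
    set c := p.coeff (n+1) with hc
    set r := p - Polynomial.C c * uPoly z (n+1) with hr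
    have hrd : r.natDegree ≤ n := by
      rw [Polynomial.natDegree_le_iff_coeff_eq_zero]
      intro N hN
      have hud : (uPoly z (n+1)).natDegree = n + 1 := uPoly_natDegree z (n+1)
      rcases eq_or_lt_of_le (Nat.succ_le_of_lt hN) with h | h
      · rw [hr]
        simp only [Polynomial.coeff_sub, Polynomial.coeff_C_mul]
        rw [← h]
        have : (uPoly z (n+1)).coeff (n+1) = 1 := by
          have := (uPoly_monic z (n+1)).coeff_natDegree
          rwa [hud] at this
        rw [this, mul_one, sub_self]
      · rw [hr]
        simp only [Polynomial.coeff_sub, Polynomial.coeff_C_mul]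
        rw [Polynomial.coeff_eq_zero_of_natDegree_lt (lt_of_le_of_lt hp h),
          Polynomial.coeff_eq_zero_of_natDegree_lt (by omega), mul_zero, sub_zero]
    have hrspan : r ∈ Submodule.span ℂ (uPoly z '' Set.Iic (n+1)) := by
      refine Submodule.span_mono (Set.image_mono ?_) (ih r hrd)
      exact Set.Iic_subset_Iic.2 (Nat.le_succ n)
    have : p = r + c • uPoly z (n+1) := by rw [hr, Polynomial.smul_eq_C_mul]; ring
    rw [this]
    exact Submodule.add_mem _ hrspan
      (Submodule.smul_mem _ _ (Submodule.subset_span ⟨n+1, Set.mem_Iic.2 le_rfl, rfl⟩))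

open MvPolynomial

namespace Stmt3Aux

variable (K : ℕ)

abbrev Idx (K : ℕ) := {s : Fin (K+1) × Fin (K+1) // (s.1 : ℕ) + (s.2 : ℕ) ≤ K}

def xe (x : Fin (K+1) → ℂ) : ℕ → ℂ := fun n => if h : n < K+1 then x ⟨n, h⟩ else 0

lemma xe_lt (x : Fin (K+1) → ℂ) (i : Fin (K+1)) : xe K x (i : ℕ) = x i := by
  have h : (i:ℕ) < K+1 := i.isLt
  simp [xe, h]

variable (x y : Fin (K+1) → ℂ)

noncomputable def NP (s : Idx K) : MvPolynomial (Fin 2) ℂ :=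
  Polynomial.aeval (MvPolynomial.X 0) (uPoly (xe K x) s.1.1) *
  Polynomial.aeval (MvPolynomial.X 1) (uPoly (xe K y) s.1.2)

lemma aeval_uPoly (z : ℕ → ℂ) (i : ℕ) (v : Fin 2) :
    Polynomial.aeval (MvPolynomial.X (R := ℂ) v) (uPoly z i)
      = ∏ k ∈ range i, (MvPolynomial.X v - MvPolynomial.C (z k)) := by
  rw [uPoly, map_prod]
  simp

lemma eval_NP (s t : Idx K) :
    MvPolynomial.eval ![x s.1.1, y s.1.2] (NP K x y t)
      = (∏ k ∈ range (t.1.1 : ℕ), (x s.1.1 - xe K x k)) *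
        (∏ l ∈ range (t.1.2 : ℕ), (y s.1.2 - xe K y l)) := by
  rw [NP, aeval_uPoly, aeval_uPoly, map_mul, map_prod, map_prod]
  simp

lemma totalDegree_bound (v : Fin 2) (z : ℕ → ℂ) (n : ℕ) :
    (∏ k ∈ range n, (MvPolynomial.X (R := ℂ) v - MvPolynomial.C (z k))).totalDegree ≤ n := by
  have h1 : ∀ k, (MvPolynomial.X (R := ℂ) v - MvPolynomial.C (z k)).totalDegree ≤ 1 := by
    intro k
    rw [sub_eq_add_neg, ← map_neg]
    refine le_trans (totalDegree_add _ _) ?_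
    rw [totalDegree_X, max_le_iff]
    exact ⟨le_rfl, le_trans (le_of_eq (totalDegree_C _)) (Nat.zero_le 1)⟩
  refine le_trans (totalDegree_finset_prod _ _) ?_
  refine le_trans (Finset.sum_le_sum (fun k _ => h1 k)) ?_
  simp

lemma totalDegree_NP (s : Idx K) : (NP K x y s).totalDegree ≤ K := by
  rw [NP, aeval_uPoly, aeval_uPoly]
  exact le_trans (totalDegree_mul _ _)
    (le_trans (add_le_add (totalDegree_bound _ _ _) (totalDegree_bound _ _ _)) s.2)

noncomputable def Mmat : Matrix (Idx K) (Idx K) ℂ :=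
  fun pq ij => MvPolynomial.eval ![x pq.1.1, y pq.1.2] (NP K x y ij)

def msr (s : Idx K) : ℕ := ((s.1.1 : ℕ) + (s.1.2 : ℕ)) * (K + 2) + (s.1.1 : ℕ)

lemma msr_inj : Function.Injective (msr K) := by
  intro s t h
  have hs := s.1.1.isLt
  have ht := t.1.1.isLt
  rw [msr, msr] at h
  have key : (s.1.1:ℕ) + (s.1.2:ℕ) = (t.1.1:ℕ) + (t.1.2:ℕ) := by
    by_contra hne
    rcases Nat.lt_or_ge ((s.1.1:ℕ) + (s.1.2:ℕ)) ((t.1.1:ℕ) + (t.1.2:ℕ)) with hlt | hge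
    · have h2 : ((s.1.1:ℕ) + (s.1.2:ℕ) + 1) * (K+2) ≤ ((t.1.1:ℕ) + (t.1.2:ℕ)) * (K+2) :=
        Nat.mul_le_mul_right _ hlt
      rw [add_mul, one_mul] at h2
      omega
    · have hgt : (t.1.1:ℕ) + (t.1.2:ℕ) < (s.1.1:ℕ) + (s.1.2:ℕ) := lt_of_le_of_ne hge (Ne.symm hne)
      have h2 : ((t.1.1:ℕ) + (t.1.2:ℕ) + 1) * (K+2) ≤ ((s.1.1:ℕ) + (s.1.2:ℕ)) * (K+2) :=
        Nat.mul_le_mul_right _ hgt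
      rw [add_mul, one_mul] at h2
      omega
  rw [key] at h
  have h1 : (s.1.1:ℕ) = (t.1.1:ℕ) := Nat.add_left_cancel h
  have h2 : (s.1.2:ℕ) = (t.1.2:ℕ) := by omega
  exact Subtype.ext (Prod.ext (Fin.ext h1) (Fin.ext h2))

lemma Mmat_diag (hx : Function.Injective x) (hy : Function.Injective y) (s : Idx K) :
    Mmat K x y s s ≠ 0 := by
  rw [Mmat, eval_NP]
  refine mul_ne_zero ?_ ?_
  · rw [Finset.prod_ne_zero_iff]
    intro k hk
    rw [Finset.mem_range] at hk
    have hkK : k < K + 1 := by have := s.1.1.isLt; omega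
    rw [show xe K x k = x ⟨k, hkK⟩ from by simp [xe, hkK], sub_ne_zero]
    intro hcon
    exact absurd (congrArg Fin.val (hx hcon)) (by simp; omega)
  · rw [Finset.prod_ne_zero_iff]
    intro l hl
    rw [Finset.mem_range] at hl
    have hlK : l < K + 1 := by have := s.1.2.isLt; omega
    rw [show xe K y l = y ⟨l, hlK⟩ from by simp [xe, hlK], sub_ne_zero]
    intro hcon
    exact absurd (congrArg Fin.val (hy hcon)) (by simp; omega)

lemma Mmat_zero (s t : Idx K) (h : msr K s < msr K t) : Mmat K x y s t = 0 := by
  have hcase : (s.1.1:ℕ) < (t.1.1:ℕ) ∨ (s.1.2:ℕ) < (t.1.2:ℕ) := by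
    by_contra hcon
    push_neg at hcon
    have h2 : ((t.1.1:ℕ) + (t.1.2:ℕ)) * (K+2) ≤ ((s.1.1:ℕ) + (s.1.2:ℕ)) * (K+2) :=
      Nat.mul_le_mul_right _ (by omega)
    rw [msr, msr] at h
    omega
  rw [Mmat, eval_NP]
  rcases hcase with h1 | h1
  · refine mul_eq_zero_of_left ?_ _
    refine Finset.prod_eq_zero (Finset.mem_range.2 h1) ?_
    rw [xe_lt, sub_self]
  · refine mul_eq_zero_of_right _ ?_
    refine Finset.prod_eq_zero (Finset.mem_range.2 h1) ?_
    rw [xe_lt, sub_self]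

def OIdx (K : ℕ) : Type := Idx K

instance : Fintype (OIdx K) := inferInstanceAs (Fintype (Idx K))
instance : DecidableEq (OIdx K) := inferInstanceAs (DecidableEq (Idx K))
noncomputable instance : LinearOrder (OIdx K) :=
  LinearOrder.lift' (fun s : Idx K => msr K s) (msr_inj K)

def oe (K : ℕ) : OIdx K ≃ Idx K := Equiv.refl (Idx K)

lemma Mmat_det_ne (hx : Function.Injective x) (hy : Function.Injective y) :
    (Mmat K x y).det ≠ 0 := by
  rw [← Matrix.det_submatrix_equiv_self (oe K) (Mmat K x y)]
  have htri : ((Mmat K x y).submatrix (oe K) (oe K)).BlockTriangular OrderDual.toDual := by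
    intro s t hst
    have hst' : msr K (oe K s) < msr K (oe K t) := hst
    exact Mmat_zero K x y (oe K s) (oe K t) hst'
  rw [Matrix.det_of_lowerTriangular _ htri]
  exact Finset.prod_ne_zero_iff.2 fun s _ => Mmat_diag K x y hx hy (oe K s)

lemma pow_mem_span (a b : ℕ) (hab : a + b ≤ K) :
    (MvPolynomial.X (R := ℂ) 0 ^ a * MvPolynomial.X 1 ^ b)
      ∈ Submodule.span ℂ (Set.range (NP K x y)) := by
  have hXa : (Polynomial.X : Polynomial ℂ) ^ a ∈ Submodule.span ℂ (uPoly (xe K x) '' Set.Iic a) :=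
    uni_span (xe K x) a _ (by simp [Polynomial.natDegree_X_pow])
  have hXb : (Polynomial.X : Polynomial ℂ) ^ b ∈ Submodule.span ℂ (uPoly (xe K y) '' Set.Iic b) :=
    uni_span (xe K y) b _ (by simp [Polynomial.natDegree_X_pow])
  set L0 := (Polynomial.aeval (R := ℂ) (MvPolynomial.X (R := ℂ) (0 : Fin 2))).toLinearMap with hL0
  set L1 := (Polynomial.aeval (R := ℂ) (MvPolynomial.X (R := ℂ) (1 : Fin 2))).toLinearMap with hL1
  have h0 : MvPolynomial.X (R := ℂ) 0 ^ a ∈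
      Submodule.span ℂ (L0 '' (uPoly (xe K x) '' Set.Iic a)) := by
    have e0 : MvPolynomial.X (R := ℂ) 0 ^ a = L0 (Polynomial.X ^ a) := by simp [hL0]
    rw [e0]
    exact Submodule.apply_mem_span_image_of_mem_span L0 hXa
  have h1 : MvPolynomial.X (R := ℂ) 1 ^ b ∈
      Submodule.span ℂ (L1 '' (uPoly (xe K y) '' Set.Iic b)) := by
    have e1 : MvPolynomial.X (R := ℂ) 1 ^ b = L1 (Polynomial.X ^ b) := by simp [hL1]
    rw [e1]
    exact Submodule.apply_mem_span_image_of_mem_span L1 hXb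
  have hmul := Submodule.mul_mem_mul h0 h1
  rw [Submodule.span_mul_span] at hmul
  refine Submodule.span_mono ?_ hmul
  rintro _ ⟨p, ⟨_, ⟨i, hi, rfl⟩, rfl⟩, q, ⟨_, ⟨j, hj, rfl⟩, rfl⟩, rfl⟩
  rw [Set.mem_Iic] at hi hj
  refine ⟨⟨(⟨i, by omega⟩, ⟨j, by omega⟩), by simpa using by omega⟩, ?_⟩
  rfl

lemma mem_span_NP (P : MvPolynomial (Fin 2) ℂ) (hP : P.totalDegree ≤ K) :
    P ∈ Submodule.span ℂ (Set.range (NP K x y)) := by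
  rw [← MvPolynomial.support_sum_monomial_coeff P]
  refine Submodule.sum_mem _ fun d hd => ?_
  have hdeg : (d 0 : ℕ) + d 1 ≤ K := by
    have h1 : (d.sum fun _ e => e) ≤ P.totalDegree := MvPolynomial.le_totalDegree hd
    have h2 : (d.sum fun _ e => e) = d 0 + d 1 := by
      rw [Finsupp.sum_fintype _ _ (fun _ => rfl), Fin.sum_univ_two]
    omega
  have hmono : MvPolynomial.monomial d (MvPolynomial.coeff d P)
      = MvPolynomial.coeff d P • (MvPolynomial.X (R := ℂ) 0 ^ d 0 * MvPolynomial.X 1 ^ d 1) := by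
    rw [MvPolynomial.monomial_eq, Finsupp.prod_fintype _ _ (fun _ => pow_zero _),
      Fin.prod_univ_two, MvPolynomial.smul_eq_C_mul]
  rw [hmono]
  exact Submodule.smul_mem _ _ (pow_mem_span K x y (d 0) (d 1) hdeg)

end Stmt3Aux

open Matrix in
theorem stmt_3 (K : ℕ) (x y : Fin (K + 1) → ℂ)
    (hx : Function.Injective x) (hy : Function.Injective y)
    (a : Fin (K + 1) → Fin (K + 1) → ℂ) :
    ∃! P : MvPolynomial (Fin 2) ℂ, P.totalDegree ≤ K ∧
      ∀ i j : Fin (K + 1), (i : ℕ) + (j : ℕ) ≤ K →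
        MvPolynomial.eval ![x i, y j] P = a i j := by
  classical
  set M := Stmt3Aux.Mmat K x y with hM
  have hdet : M.det ≠ 0 := Stmt3Aux.Mmat_det_ne K x y hx hy
  have hdetU : IsUnit M.det := isUnit_iff_ne_zero.2 hdet
  set av : Stmt3Aux.Idx K → ℂ := fun s => a s.1.1 s.1.2 with hav
  set c : Stmt3Aux.Idx K → ℂ := M⁻¹ *ᵥ av with hc
  have hev : ∀ (w : Stmt3Aux.Idx K → ℂ) (s : Stmt3Aux.Idx K),
      MvPolynomial.eval ![x s.1.1, y s.1.2] (∑ t, w t • Stmt3Aux.NP K x y t) = (M *ᵥ w) s := by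
    intro w s
    rw [map_sum]
    rw [Matrix.mulVec, dotProduct]
    refine Finset.sum_congr rfl fun t _ => ?_
    rw [MvPolynomial.smul_eq_C_mul, _root_.map_mul, MvPolynomial.eval_C, mul_comm]
    rfl
  have hMc : M *ᵥ c = av := by
    rw [hc, Matrix.mulVec_mulVec, Matrix.mul_nonsing_inv M hdetU, Matrix.one_mulVec]
  refine ⟨∑ t, c t • Stmt3Aux.NP K x y t, ⟨?_, ?_⟩, ?_⟩
  · refine le_trans (MvPolynomial.totalDegree_finset_sum _ _) ?_
    refine Finset.sup_le fun t _ => ?_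
    exact le_trans (MvPolynomial.totalDegree_smul_le _ _) (Stmt3Aux.totalDegree_NP K x y t)
  · intro i j hij
    have := hev c ⟨(i, j), hij⟩
    rw [this, hMc]
  · intro Q hQ
    obtain ⟨hQd, hQe⟩ := hQ
    have hQspan : Q ∈ Submodule.span ℂ (Set.range (Stmt3Aux.NP K x y)) :=
      Stmt3Aux.mem_span_NP K x y Q hQd
    rw [Submodule.mem_span_range_iff_exists_fun] at hQspan
    obtain ⟨cQ, hcQ⟩ := hQspan
    have hMcQ : M *ᵥ cQ = av := by
      funext s
      rw [← hev cQ s, hcQ]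
      exact hQe s.1.1 s.1.2 s.2
    have hcQc : cQ = c := by
      rw [hc, ← hMcQ, Matrix.mulVec_mulVec, Matrix.nonsing_inv_mul M hdetU, Matrix.one_mulVec]
    rw [← hcQ, hcQc]
end

section
/- Let N ≥ 2 and n ≥ −1. An element v ∈ 𝔏_n satisfies [x_a ∂/∂x_b, v] = 0 for all 1 ≤ a < b ≤ N if and only if v is a scalar multiple of x₁^{n+1} ∂/∂x_N; that is, the space of highest weight vectors in 𝔏_n (together with 0) is exactly ℂ · x₁^{n+1} ∂/∂x_N. -/
open MvPolynomial

/-- The divergence-zero vector field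
`S_{ab}(k) = k_b x^{k-e_b} ∂/∂x_a − k_a x^{k-e_a} ∂/∂x_b`,
as a derivation of `ℂ[x₁, …, x_N]`. -/
noncomputable def Sab (N : ℕ) (a b : Fin N) (k : Fin N →₀ ℕ) :
    Derivation ℂ (MvPolynomial (Fin N) ℂ) (MvPolynomial (Fin N) ℂ) :=
  (monomial (k - Finsupp.single b 1) ((k b : ℂ))) • pderiv a
    - (monomial (k - Finsupp.single a 1) ((k a : ℂ))) • pderiv b

/-- The graded component `𝔏_n`: the span of the `S_{ab}(k)` with `|k| = n + 2`. -/
noncomputable def Lcomp (N : ℕ) (n : ℤ) :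
    Submodule ℂ (Derivation ℂ (MvPolynomial (Fin N) ℂ) (MvPolynomial (Fin N) ℂ)) :=
  Submodule.span ℂ {d | ∃ (a b : Fin N) (k : Fin N →₀ ℕ),
    ((k.sum fun _ m => m : ℕ) : ℤ) = n + 2 ∧ d = Sab N a b k}

/-- The vector field `x_a ∂/∂x_b` as a derivation of `ℂ[x₁, …, x_N]`. -/
noncomputable def xdel (N : ℕ) (a b : Fin N) :
    Derivation ℂ (MvPolynomial (Fin N) ℂ) (MvPolynomial (Fin N) ℂ) :=
  (X a : MvPolynomial (Fin N) ℂ) • pderiv b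

/-! ### Auxiliary lemmas -/

lemma aux_deg_add {N : ℕ} (f g : Fin N →₀ ℕ) : (f + g).degree = f.degree + g.degree := by
  rw [Finsupp.degree_eq_weight_one, map_add]

lemma aux_deg_single {N : ℕ} (i : Fin N) (t : ℕ) : (Finsupp.single i t).degree = t := by
  classical
  rcases eq_or_ne t 0 with rfl | ht
  · simp [Finsupp.degree]
  · rw [Finsupp.degree_apply, Finsupp.support_single_ne_zero _ ht, Finset.sum_singleton,
      Finsupp.single_eq_same]

lemma aux_sub_add_single {N : ℕ} {k : Fin N →₀ ℕ} {b : Fin N} (hb : k b ≠ 0) :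
    k - Finsupp.single b 1 + Finsupp.single b 1 = k := by
  ext t
  rw [Finsupp.add_apply, Finsupp.tsub_apply]
  rcases eq_or_ne b t with rfl | ht
  · rw [Finsupp.single_eq_same]
    omega
  · rw [Finsupp.single_eq_of_ne' ht]
    omega

lemma aux_deg_sub_single {N : ℕ} {k : Fin N →₀ ℕ} {b : Fin N} (hb : k b ≠ 0) {m : ℕ}
    (hk : k.degree = m + 1) : (k - Finsupp.single b 1).degree = m := by
  have h1 := aux_deg_add (k - Finsupp.single b 1) (Finsupp.single b 1)
  rw [aux_sub_add_single hb, hk, aux_deg_single] at h1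
  omega

lemma aux_coeff_pderiv {N : ℕ} (j : Fin N) (p : MvPolynomial (Fin N) ℂ) (m : Fin N →₀ ℕ) :
    coeff m (pderiv j p) = ((m j + 1 : ℕ) : ℂ) * coeff (m + Finsupp.single j 1) p := by
  induction p using MvPolynomial.induction_on' with
  | add p q hp hq => simp [hp, hq, mul_add]
  | monomial s a =>
    rw [pderiv_monomial, coeff_monomial, coeff_monomial]
    by_cases h : s = m + Finsupp.single j 1
    · subst h
      have h1 : m + Finsupp.single j 1 - Finsupp.single j 1 = m := by simp
      have h2 : (m + Finsupp.single j 1 : Fin N →₀ ℕ) j = m j + 1 := by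
        rw [Finsupp.add_apply, Finsupp.single_eq_same]
      rw [if_pos h1, h2, if_pos rfl]
      push_cast
      ring
    · rw [if_neg h, mul_zero]
      by_cases h3 : s j = 0
      · have h4 : s - Finsupp.single j 1 = s := by
          ext t
          rw [Finsupp.tsub_apply, Finsupp.single_apply]
          rcases eq_or_ne j t with rfl | ht
          · simp [h3]
          · simp [ht]
        rw [h4, h3]
        simp only [Nat.cast_zero, mul_zero, ite_self]
      · have h5 : s - Finsupp.single j 1 ≠ m := by
          intro h5
          apply h
          ext t
          have h6 := congrArg (fun f : Fin N →₀ ℕ => f t) h5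
          simp only [Finsupp.tsub_apply, Finsupp.add_apply] at h6 ⊢
          rcases eq_or_ne j t with rfl | ht
          · rw [Finsupp.single_eq_same] at h6 ⊢
            omega
          · rw [Finsupp.single_eq_of_ne' ht] at h6 ⊢
            omega
        rw [if_neg h5]

lemma aux_coeff_eq_zero {N : ℕ} {j : Fin N} {p : MvPolynomial (Fin N) ℂ}
    (h : pderiv j p = 0) {m : Fin N →₀ ℕ} (hm : m j ≠ 0) : coeff m p = 0 := by
  have key := aux_coeff_pderiv j p (m - Finsupp.single j 1)
  rw [h, coeff_zero] at key
  have hms : m - Finsupp.single j 1 + Finsupp.single j 1 = m := by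
    ext t
    rw [Finsupp.add_apply, Finsupp.tsub_apply]
    rcases eq_or_ne j t with rfl | ht
    · rw [Finsupp.single_eq_same]
      omega
    · rw [Finsupp.single_eq_of_ne' ht]
      omega
  rw [hms] at key
  have hcast : ∀ x : ℕ, ((x + 1 : ℕ) : ℂ) ≠ 0 := fun x => by exact_mod_cast Nat.succ_ne_zero x
  exact (mul_eq_zero.mp key.symm).resolve_left (hcast _)

lemma aux_eq_smul_monomial {N : ℕ} (i0 : Fin N) (m : ℕ) (p : MvPolynomial (Fin N) ℂ)
    (hh : p.IsHomogeneous m) (hd : ∀ j, j ≠ i0 → pderiv j p = 0) :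
    p = coeff (Finsupp.single i0 m) p • monomial (Finsupp.single i0 m) (1 : ℂ) := by
  ext d
  rw [smul_monomial, smul_eq_mul, mul_one, coeff_monomial]
  by_cases hdm : Finsupp.single i0 m = d
  · rw [if_pos hdm, hdm]
  · rw [if_neg hdm]
    by_cases hj : ∀ j, j ≠ i0 → d j = 0
    · have hds : d = Finsupp.single i0 (d i0) := by
        ext t
        rcases eq_or_ne t i0 with rfl | ht
        · simp
        · rw [hj t ht, Finsupp.single_apply, if_neg (by simp [Ne.symm ht])]
      by_cases him : d i0 = m
      · exact (hdm (by rw [hds, him])).elim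
      · apply hh.coeff_eq_zero
        rw [hds, aux_deg_single]
        exact him
    · push_neg at hj
      obtain ⟨j, hji, hdj⟩ := hj
      exact aux_coeff_eq_zero (hd j hji) hdj

lemma aux_Sab_apply_X {N : ℕ} (a b i : Fin N) (k : Fin N →₀ ℕ) :
    Sab N a b k (X i) =
      (if a = i then monomial (k - Finsupp.single b 1) ((k b : ℂ)) else 0)
      - (if b = i then monomial (k - Finsupp.single a 1) ((k a : ℂ)) else 0) := by
  rw [Sab, Derivation.sub_apply, Derivation.smul_apply, Derivation.smul_apply]
  congr 1
  · rcases eq_or_ne a i with rfl | ha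
    · rw [pderiv_X_self, if_pos rfl, smul_eq_mul, mul_one]
    · rw [pderiv_X_of_ne (Ne.symm ha), if_neg ha, smul_zero]
  · rcases eq_or_ne b i with rfl | hb
    · rw [pderiv_X_self, if_pos rfl, smul_eq_mul, mul_one]
    · rw [pderiv_X_of_ne (Ne.symm hb), if_neg hb, smul_zero]

lemma aux_mono_hom {N : ℕ} (k : Fin N →₀ ℕ) (b : Fin N) {m : ℕ} (hk : k.degree = m + 1) :
    (monomial (k - Finsupp.single b 1) ((k b : ℂ))).IsHomogeneous m := by
  by_cases hb : k b = 0
  · rw [hb]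
    simp only [Nat.cast_zero, monomial_zero]
    exact isHomogeneous_zero _ _ _
  · exact isHomogeneous_monomial _ (aux_deg_sub_single hb hk)

lemma aux_Sab_hom {N : ℕ} (a b i : Fin N) (k : Fin N →₀ ℕ) {m : ℕ} (hk : k.degree = m + 1) :
    ((Sab N a b k) (X i)).IsHomogeneous m := by
  rw [aux_Sab_apply_X]
  apply MvPolynomial.IsHomogeneous.sub
  · split
    · exact aux_mono_hom k b hk
    · exact isHomogeneous_zero _ _ _
  · split
    · exact aux_mono_hom k a hk
    · exact isHomogeneous_zero _ _ _

lemma aux_Sab_div {N : ℕ} (a b : Fin N) (k : Fin N →₀ ℕ) :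
    ∑ i : Fin N, pderiv i ((Sab N a b k) (X i)) = 0 := by
  rcases eq_or_ne a b with rfl | hab
  · have : Sab N a a k = 0 := sub_self _
    simp [this]
  · have key : ∀ i : Fin N, pderiv i ((Sab N a b k) (X i)) =
        (if i = a then pderiv a (monomial (k - Finsupp.single b 1) ((k b : ℂ))) else 0)
        - (if i = b then pderiv b (monomial (k - Finsupp.single a 1) ((k a : ℂ))) else 0) := by
      intro i
      rw [aux_Sab_apply_X, map_sub]
      congr 1
      · rcases eq_or_ne a i with rfl | ha
        · rw [if_pos rfl, if_pos rfl]
        · rw [if_neg ha, if_neg (Ne.symm ha), map_zero]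
      · rcases eq_or_ne b i with rfl | hb
        · rw [if_pos rfl, if_pos rfl]
        · rw [if_neg hb, if_neg (Ne.symm hb), map_zero]
    rw [Finset.sum_congr rfl (fun i _ => key i), Finset.sum_sub_distrib,
      Finset.sum_ite_eq' Finset.univ a, Finset.sum_ite_eq' Finset.univ b,
      if_pos (Finset.mem_univ a), if_pos (Finset.mem_univ b)]
    rw [pderiv_monomial, pderiv_monomial]
    have e1 : (k - Finsupp.single b 1 : Fin N →₀ ℕ) a = k a := by
      rw [Finsupp.tsub_apply, Finsupp.single_eq_of_ne' (Ne.symm hab)]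
      omega
    have e2 : (k - Finsupp.single a 1 : Fin N →₀ ℕ) b = k b := by
      rw [Finsupp.tsub_apply, Finsupp.single_eq_of_ne' hab]
      omega
    have e3 : k - Finsupp.single b 1 - Finsupp.single a 1
        = k - Finsupp.single a 1 - Finsupp.single b 1 := by
      ext t
      simp only [Finsupp.tsub_apply]
      omega
    rw [e1, e2, e3, sub_eq_zero]
    congr 1
    ring

lemma aux_xdel_apply_X {N : ℕ} (a b i : Fin N) :
    xdel N a b (X i) = if i = b then X a else 0 := by
  rw [xdel, Derivation.smul_apply, smul_eq_mul]
  rcases eq_or_ne i b with rfl | hib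
  · rw [pderiv_X_self, mul_one, if_pos rfl]
  · rw [pderiv_X_of_ne hib, mul_zero, if_neg hib]

lemma aux_hom_zero_pderiv {N : ℕ} {p : MvPolynomial (Fin N) ℂ} (hh : p.IsHomogeneous 0)
    (j : Fin N) : pderiv j p = 0 := by
  ext m
  rw [aux_coeff_pderiv, coeff_zero]
  have : coeff (m + Finsupp.single j 1) p = 0 := by
    apply hh.coeff_eq_zero
    rw [aux_deg_add, aux_deg_single]
    omega
  rw [this, mul_zero]

theorem stmt_11 (N : ℕ) (hN : 2 ≤ N) (n : ℤ) (hn : -1 ≤ n)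
    (v : Derivation ℂ (MvPolynomial (Fin N) ℂ) (MvPolynomial (Fin N) ℂ))
    (hv : v ∈ Lcomp N n) :
    (∀ a b : Fin N, a < b → ⁅xdel N a b, v⁆ = 0) ↔
      ∃ c : ℂ, v = c •
        ((monomial (Finsupp.single (⟨0, by omega⟩ : Fin N) (n + 1).toNat) (1 : ℂ)) •
          pderiv (⟨N - 1, by omega⟩ : Fin N)) := by
  have hN0 : 0 < N := by omega
  set m : ℕ := (n + 1).toNat with hmdef
  have hm1 : (m : ℤ) = n + 1 := Int.toNat_of_nonneg (by omega)
  set i0 : Fin N := ⟨0, by omega⟩ with hi0def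
  set iN : Fin N := ⟨N - 1, by omega⟩ with hiNdef
  have hi0N : i0 < iN := by
    rw [Fin.lt_def]
    show 0 < N - 1
    omega
  -- the mixed monomial identity
  have hmul_mono : ∀ (s : Fin N →₀ ℕ) (c : ℂ) (i : Fin N),
      X i * monomial s c = monomial (s + Finsupp.single i 1) c := by
    intro s c i
    rw [X, monomial_mul, one_mul, add_comm]
  -- homogeneity and divergence from membership in Lcomp
  obtain ⟨hHom, hDiv⟩ :
      (∀ i : Fin N, ((v : Derivation ℂ (MvPolynomial (Fin N) ℂ) (MvPolynomial (Fin N) ℂ))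
        (X i)).IsHomogeneous m) ∧ (∑ i : Fin N, pderiv i (v (X i)) = 0) := by
    refine Submodule.span_induction ?_ ?_ ?_ ?_ hv
    · rintro d ⟨a, b, k, hk, rfl⟩
      have hdeg : k.degree = m + 1 := by
        have h0 : ((k.degree : ℕ) : ℤ) = n + 2 := hk
        omega
      exact ⟨fun i => aux_Sab_hom a b i k hdeg, aux_Sab_div a b k⟩
    · constructor
      · intro i
        simpa using isHomogeneous_zero (Fin N) ℂ m
      · simp
    · rintro x y _ _ ⟨hx1, hx2⟩ ⟨hy1, hy2⟩
      constructor
      · intro i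
        rw [Derivation.add_apply]
        exact (hx1 i).add (hy1 i)
      · simp only [Derivation.add_apply, map_add]
        rw [Finset.sum_add_distrib, hx2, hy2, add_zero]
    · rintro c x _ ⟨hx1, hx2⟩
      constructor
      · intro i
        rw [Derivation.smul_apply, smul_eq_C_mul]
        exact (hx1 i).C_mul c
      · simp only [Derivation.smul_apply, Derivation.map_smul]
        rw [← Finset.smul_sum, hx2, smul_zero]
  constructor
  · -- forward direction
    intro hBr
    have hC : ∀ a b i : Fin N, a < b →
        X a * pderiv b (v (X i)) = (if i = b then v (X a) else 0) := by
      intro a b i hab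
      have h0 := congrArg
        (fun D : Derivation ℂ (MvPolynomial (Fin N) ℂ) (MvPolynomial (Fin N) ℂ) => D (X i))
        (hBr a b hab)
      simp only [Derivation.commutator_apply, Derivation.zero_apply] at h0
      rw [sub_eq_zero, aux_xdel_apply_X] at h0
      have h1 : xdel N a b (v (X i)) = X a * pderiv b (v (X i)) := by
        rw [xdel, Derivation.smul_apply, smul_eq_mul]
      rw [← h1, h0]
      rcases eq_or_ne i b with rfl | hib
      · rw [if_pos rfl, if_pos rfl]
      · rw [if_neg hib, if_neg hib, map_zero]
    have hzero : ∀ b i : Fin N, b ≠ i0 → i ≠ b → pderiv b (v (X i)) = 0 := by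
      intro b i hb hib
      have hlt : i0 < b := by
        rw [Fin.lt_def]
        show 0 < b.val
        exact Nat.pos_of_ne_zero (fun h => hb (Fin.ext h))
      have h := hC i0 b i hlt
      rw [if_neg hib] at h
      exact (mul_eq_zero.mp h).resolve_left (X_ne_zero _)
    have hdiag : ∀ a b : Fin N, a < b → X a * pderiv b (v (X b)) = v (X a) := by
      intro a b hab
      have h := hC a b b hab
      rwa [if_pos rfl] at h
    -- the lowest component
    set c : ℂ := coeff (Finsupp.single i0 m) (v (X i0)) with hcdef
    have hvi0 : v (X i0) = c • monomial (Finsupp.single i0 m) (1 : ℂ) :=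
      aux_eq_smul_monomial i0 m _ (hHom i0) (fun j hj => hzero j i0 hj (Ne.symm hj))
    have hbb : ∀ b : Fin N, pderiv b (v (X b)) = 0 := by
      rcases Nat.eq_zero_or_pos m with hm0 | hmpos
      · intro b
        exact aux_hom_zero_pderiv (hm0 ▸ hHom b) b
      · obtain ⟨m', hm'⟩ : ∃ m', m = m' + 1 := ⟨m - 1, by omega⟩
        have hmono : X i0 * monomial (Finsupp.single i0 m') (1 : ℂ)
            = monomial (Finsupp.single i0 m) (1 : ℂ) := by
          rw [hmul_mono, ← Finsupp.single_add, ← hm']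
        have hbbne : ∀ b : Fin N, b ≠ i0 →
            pderiv b (v (X b)) = c • monomial (Finsupp.single i0 m') (1 : ℂ) := by
          intro b hb
          have hlt : i0 < b := by
            rw [Fin.lt_def]
            show 0 < b.val
            exact Nat.pos_of_ne_zero (fun h => hb (Fin.ext h))
          apply mul_left_cancel₀ (X_ne_zero i0)
          rw [hdiag i0 b hlt, hvi0, mul_smul_comm, hmono]
        have hpdi0 : pderiv i0 (v (X i0))
            = (c * (m : ℕ)) • monomial (Finsupp.single i0 m') (1 : ℂ) := by
          rw [hvi0, Derivation.map_smul, pderiv_monomial]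
          have e1 : Finsupp.single i0 m - Finsupp.single i0 1
              = Finsupp.single i0 m' := by
            ext t
            rw [Finsupp.tsub_apply]
            rcases eq_or_ne i0 t with rfl | ht
            · rw [Finsupp.single_eq_same, Finsupp.single_eq_same, Finsupp.single_eq_same]
              omega
            · rw [Finsupp.single_eq_of_ne' ht, Finsupp.single_eq_of_ne' ht,
                Finsupp.single_eq_of_ne' ht]
              omega
          rw [e1, Finsupp.single_eq_same, one_mul, smul_monomial, smul_monomial,
            smul_eq_mul, smul_eq_mul, mul_one]
        have hrest : ∑ b ∈ Finset.univ.erase i0, pderiv b (v (X b))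
            = ∑ _b ∈ Finset.univ.erase i0, c • monomial (Finsupp.single i0 m') (1 : ℂ) :=
          Finset.sum_congr rfl (fun b hb => hbbne b (Finset.ne_of_mem_erase hb))
        have hsplit : ∑ i : Fin N, pderiv i (v (X i))
            = (c * (m : ℕ)) • monomial (Finsupp.single i0 m') (1 : ℂ)
              + (N - 1) • (c • monomial (Finsupp.single i0 m') (1 : ℂ)) := by
          rw [← Finset.add_sum_erase Finset.univ _ (Finset.mem_univ i0), hpdi0, hrest,
            Finset.sum_const, Finset.card_erase_of_mem (Finset.mem_univ i0),
            Finset.card_univ, Fintype.card_fin]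
        have hq : (c * (m : ℕ) + ((N - 1 : ℕ) : ℂ) * c)
            • monomial (Finsupp.single i0 m') (1 : ℂ) = 0 := by
          have h4 : (((N - 1 : ℕ) : ℂ) * c) • monomial (Finsupp.single i0 m') (1 : ℂ)
              = (N - 1) • (c • monomial (Finsupp.single i0 m') (1 : ℂ)) := by
            rw [← smul_smul, Nat.cast_smul_eq_nsmul]
          rw [add_smul, h4, ← hsplit]
          exact hDiv
        have hne : (monomial (Finsupp.single i0 m') (1 : ℂ)) ≠ 0 := by
          rw [Ne, monomial_eq_zero]
          exact one_ne_zero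
        have hc0 : c = 0 := by
          have h2 := (smul_eq_zero.mp hq).resolve_right hne
          have hfac : c * (((m : ℕ) : ℂ) + ((N - 1 : ℕ) : ℂ)) = 0 := by
            linear_combination h2
          have hcoef : (((m : ℕ) : ℂ) + ((N - 1 : ℕ) : ℂ)) ≠ 0 := by
            have h3 : ((m + (N - 1) : ℕ) : ℂ) ≠ 0 := Nat.cast_ne_zero.mpr (by omega)
            push_cast at h3
            exact h3
          exact (mul_eq_zero.mp hfac).resolve_right hcoef
        intro b
        rcases eq_or_ne b i0 with rfl | hb
        · rw [hpdi0, hc0, zero_mul, zero_smul]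
        · rw [hbbne b hb, hc0, zero_smul]
    have hva : ∀ a : Fin N, a ≠ iN → v (X a) = 0 := by
      intro a ha
      have hlt : a < iN := by
        rw [Fin.lt_def]
        have : a.val ≠ N - 1 := fun h => ha (Fin.ext h)
        have := a.isLt
        show a.val < N - 1
        omega
      rw [← hdiag a iN hlt, hbb iN, mul_zero]
    set d : ℂ := coeff (Finsupp.single i0 m) (v (X iN)) with hddef
    have hvN : v (X iN) = d • monomial (Finsupp.single i0 m) (1 : ℂ) := by
      apply aux_eq_smul_monomial i0 m (v (X iN)) (hHom iN)
      intro j hj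
      rcases eq_or_ne j iN with rfl | hj2
      · exact hbb iN
      · exact hzero j iN hj (Ne.symm hj2)
    refine ⟨d, ?_⟩
    apply derivation_ext
    intro i
    rw [Derivation.smul_apply, Derivation.smul_apply]
    rcases eq_or_ne i iN with rfl | hiN
    · rw [pderiv_X_self, smul_eq_mul, mul_one, hvN]
    · rw [pderiv_X_of_ne hiN, smul_zero, smul_zero, hva i hiN]
  · -- reverse direction
    rintro ⟨c, rfl⟩ a b hab
    have hbne : b ≠ i0 := by
      intro h
      rw [Fin.lt_def, h] at hab
      exact Nat.not_lt_zero _ hab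
    have hane : a ≠ iN := by
      intro h
      rw [Fin.lt_def, h] at hab
      have h2 : N - 1 < b.val := hab
      have := b.isLt
      omega
    have hW : ⁅xdel N a b,
        ((monomial (Finsupp.single i0 m) (1 : ℂ)) • pderiv iN :
          Derivation ℂ (MvPolynomial (Fin N) ℂ) (MvPolynomial (Fin N) ℂ))⁆ = 0 := by
      apply derivation_ext
      intro i
      rw [Derivation.commutator_apply, Derivation.zero_apply]
      have hWX : ∀ j : Fin N,
          ((monomial (Finsupp.single i0 m) (1 : ℂ)) • pderiv iN :
            Derivation ℂ (MvPolynomial (Fin N) ℂ) (MvPolynomial (Fin N) ℂ)) (X j)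
          = if j = iN then monomial (Finsupp.single i0 m) (1 : ℂ) else 0 := by
        intro j
        rw [Derivation.smul_apply, smul_eq_mul]
        rcases eq_or_ne j iN with rfl | hj
        · rw [pderiv_X_self, mul_one, if_pos rfl]
        · rw [pderiv_X_of_ne hj, mul_zero, if_neg hj]
      rw [hWX, aux_xdel_apply_X]
      have hterm1 : xdel N a b
          (if i = iN then monomial (Finsupp.single i0 m) (1 : ℂ) else 0) = 0 := by
        rcases eq_or_ne i iN with rfl | hi
        · rw [if_pos rfl, xdel, Derivation.smul_apply, smul_eq_mul, pderiv_monomial,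
            Finsupp.single_eq_of_ne' (Ne.symm hbne), one_mul, Nat.cast_zero, monomial_zero,
            mul_zero]
        · rw [if_neg hi, map_zero]
      have hterm2 : ((monomial (Finsupp.single i0 m) (1 : ℂ)) • pderiv iN :
            Derivation ℂ (MvPolynomial (Fin N) ℂ) (MvPolynomial (Fin N) ℂ))
          (if i = b then X a else 0) = 0 := by
        rcases eq_or_ne i b with rfl | hi
        · rw [if_pos rfl, hWX a, if_neg hane]
        · rw [if_neg hi, map_zero]
      rw [hterm1, hterm2, sub_zero]
    have key : ∀ (D E : Derivation ℂ (MvPolynomial (Fin N) ℂ) (MvPolynomial (Fin N) ℂ)),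
        ⁅D, c • E⁆ = c • ⁅D, E⁆ := by
      intro D E
      apply derivation_ext
      intro i
      simp only [Derivation.commutator_apply, Derivation.smul_apply, Derivation.map_smul,
        smul_sub]
    rw [key, hW, smul_zero]
end

section
/- Each operator S_{ab}(k) is a derivation of ℂ[x₁, …, x_N], and for all q, k ∈ ℤ_{≥0}^N and all a, b, c, d ∈ {1, …, N} the commutator satisfies [S_{ab}(q), S_{cd}(k)] = q_b k_c S_{ad}(q+k−e_b−e_c) − q_b k_d S_{ac}(q+k−e_b−e_d) − q_a k_c S_{bd}(q+k−e_a−e_c) + q_a k_d S_{bc}(q+k−e_a−e_d), where any term whose scalar coefficient is zero is understood to be zero (so the shifted multi-index is only evaluated when the coefficient is nonzero, in which case it lies in ℤ_{≥0}^N). -/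
open MvPolynomial

variable {N : ℕ}

lemma exp_lemma (q k : Fin N →₀ ℕ) (b c : Fin N) (hb : q b ≠ 0) (hc : k c ≠ 0) :
    (q - Finsupp.single b 1) + (k - Finsupp.single c 1)
      = q + k - Finsupp.single b 1 - Finsupp.single c 1 := by
  ext x
  simp only [Finsupp.add_apply, Finsupp.tsub_apply, Finsupp.single_apply]
  by_cases h1 : b = x <;> by_cases h2 : c = x <;>
    simp only [h1, h2, if_pos, if_neg, ite_true, ite_false] <;> subst_vars <;> omega

lemma mul_pderiv_monomial (q k : Fin N →₀ ℕ) (b c : Fin N) :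
    pderiv b (monomial q (1 : ℂ)) * pderiv c (monomial k (1 : ℂ))
      = ((q b * k c : ℕ) : ℂ) •
          monomial (q + k - Finsupp.single b 1 - Finsupp.single c 1) (1 : ℂ) := by
  rw [pderiv_monomial, pderiv_monomial, monomial_mul, smul_monomial]
  rcases eq_or_ne (q b) 0 with hb | hb
  · simp [hb]
  rcases eq_or_ne (k c) 0 with hc | hc
  · simp [hc]
  rw [exp_lemma q k b c hb hc]
  congr 1
  push_cast [smul_eq_mul, mul_one]
  ring

lemma Sab_eq (a b : Fin N) (k : Fin N →₀ ℕ) :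
    Sab N a b k = (pderiv b (monomial k (1 : ℂ))) • pderiv a
      - (pderiv a (monomial k (1 : ℂ))) • pderiv b := by
  rw [Sab, pderiv_monomial, pderiv_monomial, one_mul, one_mul]

lemma pderiv_comm' (a c : Fin N) (p : MvPolynomial (Fin N) ℂ) :
    pderiv a (pderiv c p) = pderiv c (pderiv a p) := by
  induction p using MvPolynomial.induction_on' with
  | monomial s r =>
    rcases eq_or_ne a c with rfl | h
    · rfl
    simp only [pderiv_monomial]
    have he : s - Finsupp.single c 1 - Finsupp.single a 1
        = s - Finsupp.single a 1 - Finsupp.single c 1 := tsub_right_comm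
    rw [he]
    congr 1
    have h1 : (s - Finsupp.single c 1 : Fin N →₀ ℕ) a = s a := by
      simp [Finsupp.tsub_apply, Finsupp.single_apply, Ne.symm h]
    have h2 : (s - Finsupp.single a 1 : Fin N →₀ ℕ) c = s c := by
      simp [Finsupp.tsub_apply, Finsupp.single_apply, h]
    rw [h1, h2]; push_cast; ring
  | add p q hp hq => simp [hp, hq]

lemma comm_smul_pderiv (a c : Fin N) (u v : MvPolynomial (Fin N) ℂ) :
    ⁅u • (pderiv a : Derivation ℂ (MvPolynomial (Fin N) ℂ) (MvPolynomial (Fin N) ℂ)),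
        v • (pderiv c : Derivation ℂ (MvPolynomial (Fin N) ℂ) (MvPolynomial (Fin N) ℂ))⁆
      = (u * pderiv a v) • pderiv c - (v * pderiv c u) • pderiv a := by
  classical
  apply derivation_ext
  intro i
  simp only [Derivation.commutator_apply, Derivation.smul_apply, Derivation.sub_apply,
    smul_eq_mul]
  by_cases ha : a = i <;> by_cases hc : c = i <;>
    simp [pderiv_X, Pi.single_apply, ha, hc, pderiv_mul] <;> ring

lemma Sab_apply_monomial (a b : Fin N) (k m : Fin N →₀ ℕ) :
    (Sab N a b k) (monomial m (1 : ℂ)) =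
      (((k b * m a : ℕ) : ℂ) - ((k a * m b : ℕ) : ℂ)) •
        monomial (m + k - Finsupp.single a 1 - Finsupp.single b 1) (1 : ℂ) := by
  rw [Sab_eq]
  simp only [Derivation.sub_apply, Derivation.smul_apply, smul_eq_mul]
  rw [mul_pderiv_monomial k m b a, mul_pderiv_monomial k m a b, sub_smul]
  have h1 : k + m - Finsupp.single b 1 - Finsupp.single a 1
      = m + k - Finsupp.single a 1 - Finsupp.single b 1 := by
    rw [add_comm, tsub_right_comm]
  have h2 : k + m - Finsupp.single a 1 - Finsupp.single b 1
      = m + k - Finsupp.single a 1 - Finsupp.single b 1 := by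
    rw [add_comm]
  rw [h1, h2]

lemma smul_Sab (x y a d : Fin N) (q k : Fin N →₀ ℕ) :
    ((q x * k y : ℕ) : ℂ) • Sab N a d (q + k - Finsupp.single x 1 - Finsupp.single y 1)
      = (pderiv d (pderiv x (monomial q (1 : ℂ)) * pderiv y (monomial k (1 : ℂ)))) • pderiv a
        - (pderiv a (pderiv x (monomial q (1 : ℂ)) * pderiv y (monomial k (1 : ℂ)))) • pderiv d := by
  rw [Sab_eq, smul_sub, ← smul_assoc, ← smul_assoc, ← Derivation.map_smul,
    ← Derivation.map_smul, ← mul_pderiv_monomial q k x y]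

lemma bracket_expand (D1 D2 E1 E2 :
    Derivation ℂ (MvPolynomial (Fin N) ℂ) (MvPolynomial (Fin N) ℂ)) :
    ⁅D1 - D2, E1 - E2⁆ = ⁅D1, E1⁆ - ⁅D1, E2⁆ - ⁅D2, E1⁆ + ⁅D2, E2⁆ := by
  ext p
  simp only [Derivation.commutator_apply, Derivation.sub_apply, Derivation.add_apply, map_sub]
  ring


theorem stmt_12 (N : ℕ) (hN : 2 ≤ N) (a b c d : Fin N) (q k m : Fin N →₀ ℕ) :
    (Sab N a b k) (monomial m (1 : ℂ)) =
      (((k b * m a : ℕ) : ℂ) - ((k a * m b : ℕ) : ℂ)) •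
        monomial (m + k - Finsupp.single a 1 - Finsupp.single b 1) (1 : ℂ) ∧
    ⁅Sab N a b q, Sab N c d k⁆ =
      ((q b * k c : ℕ) : ℂ) • Sab N a d (q + k - Finsupp.single b 1 - Finsupp.single c 1)
      - ((q b * k d : ℕ) : ℂ) • Sab N a c (q + k - Finsupp.single b 1 - Finsupp.single d 1)
      - ((q a * k c : ℕ) : ℂ) • Sab N b d (q + k - Finsupp.single a 1 - Finsupp.single c 1)
      + ((q a * k d : ℕ) : ℂ) • Sab N b c (q + k - Finsupp.single a 1 - Finsupp.single d 1) := by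
  refine ⟨Sab_apply_monomial a b k m, ?_⟩
  rw [smul_Sab b c a d q k, smul_Sab b d a c q k, smul_Sab a c b d q k, smul_Sab a d b c q k]
  rw [Sab_eq a b q, Sab_eq c d k]
  rw [bracket_expand, comm_smul_pderiv, comm_smul_pderiv, comm_smul_pderiv,
    comm_smul_pderiv]
  simp only [pderiv_mul]
  simp only [pderiv_comm' b a (monomial q (1 : ℂ)), pderiv_comm' d c (monomial k (1 : ℂ))]
  module
end
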